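/- For every integer n ≥ 2, the following identity holds in ℤ[q]: [2n−1 choose n−2]_q = ∑_{r=1}^{⌊(n+1)/2⌋} (−1)^{r−1} · q^{r²−r} · [n−1 choose r]_{q²} · [2n−2r−1 choose n−2]_q. -/

import Mathlib

open Polynomial

open Finset

/-- Auxiliary Gaussian binomial, defined by the q-Pascal recursion. -/
def gb {R : Type*} [CommRing R] (u : R) : ℕ → ℕ → R
  | _, 0 => 1
  | 0, _+1 => 0
  | m+1, k+1 => gb u m (k+1) * u^(k+1) + gb u m k

variable {R : Type*} [CommRing R] {S : Type*} [CommRing S]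

@[simp] lemma gb_zero_right (u : R) (m : ℕ) : gb u m 0 = 1 := by cases m <;> rfl

lemma gb_succ_succ (u : R) (m k : ℕ) :
    gb u (m+1) (k+1) = gb u m (k+1) * u^(k+1) + gb u m k := rfl

lemma gb_of_lt (u : R) {m k : ℕ} (h : m < k) : gb u m k = 0 := by
  induction m generalizing k with
  | zero => obtain ⟨j, rfl⟩ : ∃ j, k = j + 1 := ⟨k - 1, by omega⟩; rfl
  | succ m ih =>
    obtain ⟨j, rfl⟩ : ∃ j, k = j + 1 := ⟨k - 1, by omega⟩
    rw [gb_succ_succ, ih (by omega), ih (by omega), zero_mul, zero_add]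

@[simp] lemma gb_self (u : R) (m : ℕ) : gb u m m = 1 := by
  induction m with
  | zero => rfl
  | succ m ih => rw [gb_succ_succ, gb_of_lt u (by omega), ih, zero_mul, zero_add]

lemma map_gb (φ : R →+* S) (u : R) (m k : ℕ) : φ (gb u m k) = gb (φ u) m k := by
  induction m generalizing k with
  | zero => cases k <;> simp [show ∀ j, gb u 0 (j+1) = 0 from fun j => rfl, show ∀ j, gb (φ u) 0 (j+1) = 0 from fun j => rfl]
  | succ m ih => cases k with
    | zero => simp
    | succ k => simp [gb_succ_succ, ih]

/-- The q-integer `[n]_q = 1 + q + ⋯ + q^{n−1}` as a polynomial in `ℤ[q]`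
(with `[0]_q = 0`). -/
noncomputable def qIntP (n : ℕ) : Polynomial ℤ := ∑ i ∈ Finset.range n, Polynomial.X ^ i

/-- The q-factorial `[n]_q! = [1]_q[2]_q⋯[n]_q` in `ℤ[q]`. -/
noncomputable def qFactP (n : ℕ) : Polynomial ℤ := ∏ i ∈ Finset.range n, qIntP (i + 1)

/-- The Gaussian binomial coefficient `[m choose k]_q = [m]_q!/([k]_q![m−k]_q!)`
as a polynomial in `ℤ[q]` (the division, by a monic polynomial, is exact),
and `0` if `k > m`. -/
noncomputable def qBinomP (m k : ℕ) : Polynomial ℤ :=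
  if k ≤ m then qFactP m /ₘ (qFactP k * qFactP (m - k)) else 0

/-- The Gaussian binomial coefficient `[m choose k]_{q²}`, i.e. `[m choose k]_q`
with `q` replaced by `q²`. -/
noncomputable def qBinomP2 (m k : ℕ) : Polynomial ℤ := (qBinomP m k).comp (Polynomial.X ^ 2)

lemma qIntP_add (a b : ℕ) : qIntP (a + b) = qIntP a + X ^ a * qIntP b := by
  unfold qIntP
  rw [Finset.sum_range_add, Finset.mul_sum]
  simp [pow_add]

lemma qIntP_monic (n : ℕ) : (qIntP (n + 1)).Monic := by
  have h : qIntP (n + 1) = X ^ n + qIntP n := by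
    unfold qIntP; rw [Finset.sum_range_succ, add_comm]
  rw [h]
  apply monic_X_pow_add
  apply lt_of_le_of_lt (Polynomial.degree_sum_le _ _)
  rw [Finset.sup_lt_iff (by exact_mod_cast WithBot.bot_lt_coe n)]
  intro i hi
  simpa using by exact_mod_cast (Finset.mem_range.mp hi)

lemma qFactP_monic (n : ℕ) : (qFactP n).Monic :=
  monic_prod_of_monic _ _ fun i _ => qIntP_monic i

lemma gb_mul_fact {m k : ℕ} (h : k ≤ m) :
    gb (X : Polynomial ℤ) m k * (qFactP k * qFactP (m - k)) = qFactP m := by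
  induction m generalizing k with
  | zero =>
    interval_cases k
    simp [qFactP]
  | succ m ih =>
    cases k with
    | zero => simp [qFactP]
    | succ k =>
      rcases Nat.lt_or_ge k m with hk | hk
      · have h1 : m + 1 - (k + 1) = (m - (k + 1)) + 1 := by omega
        have h2 : qFactP (m + 1 - (k+1)) = qFactP (m - (k+1)) * qIntP (m - k) := by
          rw [h1, qFactP, Finset.prod_range_succ, ← qFactP]
          congr 2
          omega
        have h3 : qFactP (k + 1) = qFactP k * qIntP (k + 1) := by
          rw [qFactP, Finset.prod_range_succ, ← qFactP]
        have e1 := ih (Nat.succ_le_of_lt hk)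
        have e2 := ih (Nat.le_of_lt hk)
        have e4 : qIntP (m + 1) = qIntP (k+1) + X ^ (k+1) * qIntP (m - k) := by
          have : m + 1 = (k+1) + (m - k) := by omega
          rw [this, qIntP_add]
        have e5 : qFactP (m + 1) = qFactP m * qIntP (m + 1) := by
          rw [qFactP, Finset.prod_range_succ, ← qFactP]
        have e3 : qFactP (m - k) = qFactP (m - (k+1)) * qIntP (m - k) := by
          have : m - k = (m - (k+1)) + 1 := by omega
          rw [this, qFactP, Finset.prod_range_succ, ← qFactP, ← this]
        rw [h3] at e1
        rw [e3] at e2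
        rw [gb_succ_succ, h2, h3, e5, e4]
        linear_combination (X^(k+1) * qIntP (m-k)) * e1 + qIntP (k+1) * e2
      · have hk' : k = m := by omega
        subst hk'
        rw [gb_succ_succ, gb_of_lt _ (by omega), gb_self, zero_mul, zero_add, one_mul,
          Nat.sub_self]
        have : qFactP 0 = 1 := by simp [qFactP]
        rw [this, mul_one]

lemma qBinomP_eq_gb {m k : ℕ} (h : k ≤ m) : qBinomP m k = gb (X : Polynomial ℤ) m k := by
  rw [qBinomP, if_pos h]
  have hm : (qFactP k * qFactP (m - k)).Monic := (qFactP_monic k).mul (qFactP_monic (m - k))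
  conv_lhs => rw [← gb_mul_fact h, mul_comm]
  exact Polynomial.mul_divByMonic_cancel_left _ hm

/-- The finite q-binomial theorem, as an identity in any commutative ring. -/
lemma qbt (u : R) (m : ℕ) : ∀ c y : R,
    ∏ j ∈ Finset.range m, (1 + c * u^j * y) =
      ∑ k ∈ Finset.range (m+1), c^k * u^(k.choose 2) * gb u m k * y^k := by
  induction m with
  | zero => intro c y; simp
  | succ m ih =>
    intro c y
    rw [Finset.prod_range_succ', Finset.sum_range_succ']
    have h1 : ∏ j ∈ Finset.range m, (1 + c * u ^ (j+1) * y)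
        = ∏ j ∈ Finset.range m, (1 + (c*u) * u ^ j * y) := by
      apply Finset.prod_congr rfl; intro j _; ring
    rw [h1, ih (c*u) y]
    have h2 : ∀ k, c^(k+1) * u^((k+1).choose 2) * gb u (m+1) (k+1) * y^(k+1)
        = (c*u)^(k+1) * u^((k+1).choose 2) * gb u m (k+1) * y^(k+1)
          + c * ((c*u)^k * u^(k.choose 2) * gb u m k * y^k) * y := by
      intro k
      rw [gb_succ_succ]
      have hc : (k+1).choose 2 = k.choose 2 + k := by
        rw [Nat.choose_succ_succ, Nat.choose_one_right, add_comm]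
      rw [hc]
      ring
    simp only [h2, Finset.sum_add_distrib]
    have hS : (∑ k ∈ Finset.range (m+1), (c*u)^k * u^(k.choose 2) * gb u m k * y^k)
        = (∑ k ∈ Finset.range m, (c*u)^(k+1) * u^((k+1).choose 2) * gb u m (k+1) * y^(k+1)) + 1 := by
      rw [Finset.sum_range_succ']
      simp
    have h5 : (∑ k ∈ Finset.range (m+1), (c*u)^(k+1) * u^((k+1).choose 2) * gb u m (k+1) * y^(k+1))
        = ∑ k ∈ Finset.range m, (c*u)^(k+1) * u^((k+1).choose 2) * gb u m (k+1) * y^(k+1) := by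
      rw [Finset.sum_range_succ, gb_of_lt u (by omega)]
      ring
    have h4 : (∑ k ∈ Finset.range (m+1), c * ((c*u)^k * u^(k.choose 2) * gb u m k * y^k) * y)
        = (∑ k ∈ Finset.range (m+1), (c*u)^k * u^(k.choose 2) * gb u m k * y^k) * (c * y) := by
      rw [Finset.sum_mul]
      apply Finset.sum_congr rfl; intro k _; ring
    rw [h5, h4]
    simp only [show (0:ℕ).choose 2 = 0 from rfl, pow_zero, Nat.choose_zero_right, gb_zero_right, mul_one, one_mul]
    linear_combination hS

abbrev RZ := Polynomial ℤ

/-- Power series whose coefficients are the Gaussian binomials `[m+k choose k]`. -/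
noncomputable def Hs (k : ℕ) : PowerSeries RZ :=
  PowerSeries.mk fun m => gb (X : RZ) (m + k) k

lemma one_sub_C_mul_X_mul_mk (c : RZ) (f : ℕ → RZ) :
    (1 - PowerSeries.C (R := RZ) c * PowerSeries.X) * PowerSeries.mk f
      = PowerSeries.mk fun m => f m - c * (if m = 0 then 0 else f (m-1)) := by
  refine PowerSeries.ext fun j => ?_
  rw [sub_mul, one_mul, map_sub, PowerSeries.coeff_mk, mul_assoc, PowerSeries.coeff_C_mul]
  cases j with
  | zero => simp
  | succ j => simp [PowerSeries.coeff_succ_X_mul]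

lemma prod_mul_Hs (k : ℕ) :
    (∏ i ∈ Finset.range (k+1), (1 - PowerSeries.C (R := RZ) (X^i) * PowerSeries.X)) * Hs k = 1 := by
  induction k with
  | zero =>
    rw [Finset.prod_range_one, pow_zero, Hs, one_sub_C_mul_X_mul_mk]
    refine PowerSeries.ext fun j => ?_
    cases j with
    | zero => simp
    | succ j => simp [PowerSeries.coeff_one, gb_zero_right]
  | succ k ih =>
    have hstep : (1 - PowerSeries.C (R := RZ) (X^(k+1)) * PowerSeries.X) * Hs (k+1) = Hs k := by
      rw [Hs, one_sub_C_mul_X_mul_mk, Hs]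
      refine PowerSeries.ext fun m => ?_
      rw [PowerSeries.coeff_mk, PowerSeries.coeff_mk]
      cases m with
      | zero => simp
      | succ m =>
        simp only [Nat.succ_ne_zero, if_false, Nat.add_sub_cancel]
        have : m + 1 + (k + 1) = (m + (k+1)) + 1 := by omega
        rw [this, gb_succ_succ]
        have : m + (k + 1) = (m + 1) + k := by omega
        rw [this]
        ring
    calc (∏ i ∈ Finset.range (k+2), (1 - PowerSeries.C (R := RZ) (X^i) * PowerSeries.X)) * Hs (k+1)
        = (∏ i ∈ Finset.range (k+1), (1 - PowerSeries.C (R := RZ) (X^i) * PowerSeries.X)) *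
            ((1 - PowerSeries.C (R := RZ) (X^(k+1)) * PowerSeries.X) * Hs (k+1)) := by
          rw [Finset.prod_range_succ]; ring
      _ = 1 := by rw [hstep, ih]

lemma two_mul_choose_two (r : ℕ) : 2 * r.choose 2 = r^2 - r := by
  induction r with
  | zero => rfl
  | succ r ih =>
    have hcs : (r+1).choose 2 = r.choose 2 + r := by
      simp [Nat.choose_succ_succ, Nat.add_comm]
    have h : (r+1)^2 = r^2 + 2*r + 1 := by ring
    have h2 : r ≤ r^2 := Nat.le_self_pow (by norm_num) r
    omega

lemma key (m : ℕ) :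
    ∑ k ∈ Finset.range (m+2),
      ((-1:RZ)^k * ((X:RZ)^2)^(k.choose 2) * gb ((X:RZ)^2) (m+1) k) *
        (if 2*k ≤ m+3 then gb (X:RZ) (m+3-2*k+m) m else 0) = 0 := by
  set Cc := PowerSeries.C (R := RZ)
  set x : PowerSeries RZ := PowerSeries.X
  have hqbt2 := qbt (Cc (X^2)) (m+1) (-1) (x^2)
  have hqbt1 := qbt (Cc X) (m+1) 1 x
  have hfac : ∀ j ∈ Finset.range (m+1), (1 + (-1) * (Cc (X^2))^j * x^2)
      = (1 - Cc (X^j) * x) * (1 + 1 * (Cc X)^j * x) := by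
    intro j _
    have h1 : (Cc X)^j = Cc (X^j) := (map_pow _ _ _).symm
    have h2 : (Cc (X^2))^j = (Cc (X^j))^2 := by
      rw [← map_pow, ← map_pow, ← pow_mul, ← pow_mul, mul_comm]
    rw [h1, h2]; ring
  have hsplit : ∏ j ∈ Finset.range (m+1), (1 + (-1) * (Cc (X^2))^j * x^2)
      = (∏ j ∈ Finset.range (m+1), (1 - Cc (X^j) * x)) *
        ∏ j ∈ Finset.range (m+1), (1 + 1 * (Cc X)^j * x) := by
    rw [← Finset.prod_mul_distrib]
    exact Finset.prod_congr rfl hfac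
  have hmain : (∑ k ∈ Finset.range (m+2),
        (-1:PowerSeries RZ)^k * (Cc (X^2))^(k.choose 2) * gb (Cc (X^2)) (m+1) k * (x^2)^k) * Hs m
      = ∑ k ∈ Finset.range (m+2), (1:PowerSeries RZ)^k * (Cc X)^(k.choose 2) * gb (Cc X) (m+1) k * x^k := by
    rw [← hqbt2, ← hqbt1, hsplit, mul_comm (∏ j ∈ Finset.range (m+1), (1 - Cc (X^j) * x)),
      mul_assoc, prod_mul_Hs m, mul_one]
  have hcoeff := congrArg (PowerSeries.coeff (R := RZ) (m+3)) hmain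
  rw [Finset.sum_mul, map_sum, map_sum] at hcoeff
  have hL : ∀ k ∈ Finset.range (m+2),
      PowerSeries.coeff (R := RZ) (m+3)
        ((-1:PowerSeries RZ)^k * (Cc (X^2))^(k.choose 2) * gb (Cc (X^2)) (m+1) k * (x^2)^k * Hs m)
      = ((-1:RZ)^k * ((X:RZ)^2)^(k.choose 2) * gb ((X:RZ)^2) (m+1) k) *
        (if 2*k ≤ m+3 then gb (X:RZ) (m+3-2*k+m) m else 0) := by
    intro k _
    have hT : (-1:PowerSeries RZ)^k * (Cc (X^2))^(k.choose 2) * gb (Cc (X^2)) (m+1) k * (x^2)^k * Hs m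
        = Cc ((-1:RZ)^k * ((X:RZ)^2)^(k.choose 2) * gb ((X:RZ)^2) (m+1) k) * (x^(2*k) * Hs m) := by
      rw [← map_gb Cc]
      simp only [map_mul, map_pow, map_neg, map_one, ← pow_mul]
      ring
    rw [hT, PowerSeries.coeff_C_mul, PowerSeries.coeff_X_pow_mul']
    congr 1
    split_ifs with h
    · rw [Hs, PowerSeries.coeff_mk]
    · rfl
  have hR : ∀ k ∈ Finset.range (m+2),
      PowerSeries.coeff (R := RZ) (m+3)
        ((1:PowerSeries RZ)^k * (Cc X)^(k.choose 2) * gb (Cc X) (m+1) k * x^k) = 0 := by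
    intro k hk
    have hT : (1:PowerSeries RZ)^k * (Cc X)^(k.choose 2) * gb (Cc X) (m+1) k * x^k
        = Cc ((1:RZ)^k * (X:RZ)^(k.choose 2) * gb (X:RZ) (m+1) k) * x^k := by
      rw [← map_gb Cc]
      simp only [map_mul, map_pow, map_one]
    rw [hT, PowerSeries.coeff_C_mul, PowerSeries.coeff_X_pow, if_neg (by
      have := Finset.mem_range.mp hk; omega), mul_zero]
  rw [Finset.sum_congr rfl hL, Finset.sum_congr rfl hR] at hcoeff
  simpa using hcoeff

lemma gb_comp (p : RZ) (m : ℕ) : ∀ k, (gb (X : RZ) m k).comp p = gb p m k := by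
  induction m with
  | zero =>
    intro k
    cases k with
    | zero => simp
    | succ k => show (gb (X:RZ) 0 (k+1)).comp p = gb p 0 (k+1); rw [show gb (X:RZ) 0 (k+1) = 0 from rfl, show gb p 0 (k+1) = 0 from rfl, zero_comp]
  | succ m ih =>
    intro k
    cases k with
    | zero => simp
    | succ k =>
      rw [gb_succ_succ, gb_succ_succ, add_comp, mul_comp, pow_comp, X_comp, ih, ih]

/-- For every `n ≥ 2`, the identity in `ℤ[q]`:
`[2n−1 choose n−2]_q = ∑_{r=1}^{⌊(n+1)/2⌋} (−1)^{r−1}·q^{r²−r}·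
  [n−1 choose r]_{q²}·[2n−2r−1 choose n−2]_q`. -/
theorem qbinom_sieve_identity (n : ℕ) (hn : 2 ≤ n) :
    qBinomP (2 * n - 1) (n - 2) =
      ∑ r ∈ Finset.Icc 1 ((n + 1) / 2),
        (-1 : Polynomial ℤ) ^ (r - 1) * Polynomial.X ^ (r ^ 2 - r) *
          qBinomP2 (n - 1) r * qBinomP (2 * n - 2 * r - 1) (n - 2) := by
  obtain ⟨m, rfl⟩ : ∃ m, n = m + 2 := ⟨n - 2, by omega⟩
  have e1 : 2 * (m+2) - 1 = 2*m+3 := by omega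
  have e2 : m + 2 - 2 = m := by omega
  have e3 : m + 2 - 1 = m+1 := by omega
  have e4 : (m+2+1)/2 = (m+3)/2 := by omega
  rw [e1, e2, e3, e4, qBinomP_eq_gb (by omega)]
  have hconv : ∀ r ∈ Finset.Icc 1 ((m+3)/2),
      (-1 : Polynomial ℤ)^(r-1) * X^(r^2-r) * qBinomP2 (m+1) r * qBinomP (2*(m+2) - 2*r - 1) m
      = -(((-1:RZ)^r * ((X:RZ)^2)^(r.choose 2) * gb ((X:RZ)^2) (m+1) r) *
          gb (X:RZ) (m+3-2*r+m) m) := by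
    intro r hr
    obtain ⟨hr1, hr2⟩ := Finset.mem_Icc.mp hr
    have h2r : 2*r ≤ m+3 := by omega
    have hb1 : 2*(m+2) - 2*r - 1 = 2*m+3-2*r := by omega
    have hb2 : m+3-2*r+m = 2*m+3-2*r := by omega
    rw [hb1, hb2, qBinomP_eq_gb (show m ≤ 2*m+3-2*r by omega)]
    rw [qBinomP2, qBinomP_eq_gb (show r ≤ m+1 by omega), gb_comp]
    have hx : (X : RZ)^(r^2 - r) = ((X:RZ)^2)^(r.choose 2) := by
      rw [← pow_mul, ← two_mul_choose_two]
    rw [hx]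
    obtain ⟨s, rfl⟩ : ∃ s, r = s + 1 := ⟨r-1, by omega⟩
    simp only [Nat.add_sub_cancel, pow_succ]
    ring
  rw [Finset.sum_congr rfl hconv]
  have hkey := key m
  rw [Finset.sum_range_succ'] at hkey
  have hzero : ((-1:RZ)^0 * ((X:RZ)^2)^((0:ℕ).choose 2) * gb ((X:RZ)^2) (m+1) 0) *
      (if 2*0 ≤ m+3 then gb (X:RZ) (m+3-2*0+m) m else 0) = gb (X:RZ) (2*m+3) m := by
    rw [if_pos (by omega)]
    have : m+3-2*0+m = 2*m+3 := by omega
    rw [this]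
    simp
  rw [hzero] at hkey
  -- convert the range-sum in hkey to a sum over Icc 1 ((m+3)/2)
  have hchain : (∑ k ∈ Finset.range (m+1),
      ((-1:RZ)^(k+1) * ((X:RZ)^2)^((k+1).choose 2) * gb ((X:RZ)^2) (m+1) (k+1)) *
        (if 2*(k+1) ≤ m+3 then gb (X:RZ) (m+3-2*(k+1)+m) m else 0))
      = ∑ r ∈ Finset.Icc 1 ((m+3)/2),
        ((-1:RZ)^r * ((X:RZ)^2)^(r.choose 2) * gb ((X:RZ)^2) (m+1) r) *
          gb (X:RZ) (m+3-2*r+m) m := by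
    have s1 : ∑ r ∈ Finset.Icc 1 (m+1),
        ((-1:RZ)^r * ((X:RZ)^2)^(r.choose 2) * gb ((X:RZ)^2) (m+1) r) *
          (if 2*r ≤ m+3 then gb (X:RZ) (m+3-2*r+m) m else 0)
        = ∑ k ∈ Finset.range (m+1),
        ((-1:RZ)^(k+1) * ((X:RZ)^2)^((k+1).choose 2) * gb ((X:RZ)^2) (m+1) (k+1)) *
          (if 2*(k+1) ≤ m+3 then gb (X:RZ) (m+3-2*(k+1)+m) m else 0) := by
      rw [← Finset.Ico_add_one_right_eq_Icc, Finset.sum_Ico_eq_sum_range]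
      apply Finset.sum_congr (by norm_num)
      intro k _
      rw [Nat.add_comm 1 k]
    rw [← s1]
    simp only [mul_ite, mul_zero]
    rw [← Finset.sum_filter]
    apply Finset.sum_congr _ (fun r _ => rfl)
    ext r
    simp only [Finset.mem_filter, Finset.mem_Icc]
    omega
  rw [hchain] at hkey
  rw [Finset.sum_neg_distrib]
  linear_combination hkey
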